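/- For every T > 0 there exist positive constants c₁, c₂ (depending only on T) such that for all ξ ∈ ℝ^d with ξ ≠ 0, c₁/(1+|ξ|²) ≤ ∫₀^T sin²(2π t |ξ|)/(4π² |ξ|²) dt ≤ c₂/(1+|ξ|²). Consequently, ∫₀^T dt ∫_{ℝ^d} |sin(2πt|ξ|)/(2π|ξ|)|² μ(dξ) < ∞ if and only if ∫_{ℝ^d} μ(dξ)/(1+|ξ|²) < ∞. -/

import Mathlib

open MeasureTheory Real intervalIntegral
open scoped Real ENNReal

open MeasureTheory Real intervalIntegral
open scoped Real

lemma cont_integrand (r : ℝ) : Continuous fun t : ℝ => sin (2*π*t*r)^2 / (4*π^2*r^2) :=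
  (((Real.continuous_sin.comp (by continuity)).pow 2).div_const _)

lemma kernel_upper (T r : ℝ) (hT : 0 < T) (hr : 0 ≤ r) :
    (∫ t in (0:ℝ)..T, sin (2*π*t*r)^2 / (4*π^2*r^2)) ≤ (T^3/3 + T/(4*π^2)) / (1+r^2) := by
  have hπ := pi_pos
  have key : ∀ t : ℝ, sin (2*π*t*r)^2 / (4*π^2*r^2) ≤ (t^2 + 1/(4*π^2)) / (1+r^2) := by
    intro t
    rcases eq_or_lt_of_le hr with h0 | hr'
    · simp [← h0]
      positivity
    · rw [div_le_div_iff₀ (by positivity) (by positivity)]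
      have h1 : sin (2*π*t*r)^2 ≤ (2*π*t*r)^2 := sin_sq_le_sq
      have h2 : sin (2*π*t*r)^2 ≤ 1 := sin_sq_le_one _
      nlinarith [h1, mul_le_mul_of_nonneg_right h2 (sq_nonneg r), (by field_simp : 1/(4*π^2) * (4*π^2) = (1:ℝ)), sq_nonneg (π*t*r)]
  calc (∫ t in (0:ℝ)..T, sin (2*π*t*r)^2 / (4*π^2*r^2))
      ≤ ∫ t in (0:ℝ)..T, (t^2 + 1/(4*π^2)) / (1+r^2) := by
        apply intervalIntegral.integral_mono_on hT.le
          ((cont_integrand r).intervalIntegrable _ _)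
          (((continuous_pow 2).add continuous_const |>.div_const _).intervalIntegrable _ _)
        exact fun t _ => key t
    _ = (T^3/3 + T/(4*π^2)) / (1+r^2) := by
        rw [intervalIntegral.integral_div, intervalIntegral.integral_add
          (((continuous_pow 2)).intervalIntegrable _ _) (intervalIntegrable_const),
          integral_pow, intervalIntegral.integral_const]
        field_simp
        linear_combination (9*T) * (by rw [← mul_pow, mul_inv_cancel₀ hπ.ne', one_pow] : π^2 * π⁻¹^2 = (1:ℝ))

lemma kernel_lower (T r : ℝ) (hT : 0 < T) (hr : 0 < r) :
    min (4*T^3/(3*π^2)) (T/(16*π^2)) / (1+r^2)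
      ≤ ∫ t in (0:ℝ)..T, sin (2*π*t*r)^2 / (4*π^2*r^2) := by
  have hπ := pi_pos
  rcases le_or_gt r (1/(4*T)) with hsmall | hbig
  · -- small r
    have step : ∀ t ∈ Set.Icc (0:ℝ) T, 4*t^2/π^2 ≤ sin (2*π*t*r)^2 / (4*π^2*r^2) := by
      rintro t ⟨ht0, htT⟩
      have hx : 0 ≤ 2*π*t*r := by positivity
      have hx' : 2*π*t*r ≤ π/2 := by
        have h1 : t*r ≤ T*(1/(4*T)) := mul_le_mul htT hsmall hr.le hT.le
        have h2 : T*(1/(4*T)) = 1/4 := by field_simp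
        rw [h2] at h1
        nlinarith [mul_le_mul_of_nonneg_left h1 hπ.le]
      have hs := Real.mul_le_sin hx hx'
      have hs' : 4*(t*r) ≤ sin (2*π*t*r) := by
        have he : 2/π*(2*π*t*r) = 4*(t*r) := by field_simp; ring
        linarith [he ▸ hs]
      rw [le_div_iff₀ (by positivity),
        (by field_simp : 4*t^2/π^2 * (4*π^2*r^2) = (4*(t*r))^2)]
      nlinarith [hs', mul_nonneg (mul_nonneg (by norm_num : (0:ℝ) ≤ 4) ht0) hr.le]
    calc min (4*T^3/(3*π^2)) (T/(16*π^2)) / (1+r^2)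
        ≤ min (4*T^3/(3*π^2)) (T/(16*π^2)) := by
          apply div_le_self (le_min (by positivity) (by positivity)) (by nlinarith [sq_nonneg r])
      _ ≤ 4*T^3/(3*π^2) := min_le_left _ _
      _ = ∫ t in (0:ℝ)..T, 4*t^2/π^2 := by
          rw [show (fun t:ℝ => 4*t^2/π^2) = fun t:ℝ => (4/π^2) * t^2 by funext t; ring,
            intervalIntegral.integral_const_mul, integral_pow]
          norm_num
          ring
      _ ≤ ∫ t in (0:ℝ)..T, sin (2*π*t*r)^2 / (4*π^2*r^2) := by
          apply intervalIntegral.integral_mono_on hT.le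
            (by exact ((continuous_const.mul (continuous_pow 2)).div_const _).intervalIntegrable _ _ : IntervalIntegrable (fun t:ℝ => 4*t^2/π^2) volume 0 T)
            ((cont_integrand r).intervalIntegrable _ _) step
  · -- large r
    have hc : (2*π*r) ≠ 0 := by positivity
    have hJ : (∫ t in (0:ℝ)..T, sin (2*π*t*r)^2)
        = (2*π*r)⁻¹ * ((2*π*r*T - sin (2*π*r*T) * cos (2*π*r*T)) / 2) := by
      have : (fun t:ℝ => sin (2*π*t*r)^2) = fun t:ℝ => (fun x => sin x ^2) ((2*π*r) * t) := by
        funext t; ring_nf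
      rw [this, intervalIntegral.integral_comp_mul_left (fun x => sin x ^2) hc,
        integral_sin_sq]
      simp only [mul_zero, Real.sin_zero, Real.cos_zero, smul_eq_mul]
      ring
    have habs : |sin (2*π*r*T) * cos (2*π*r*T)| ≤ 1/2 := by
      have h2 : sin (2*π*r*T) * cos (2*π*r*T) = sin (2*(2*π*r*T))/2 := by
        rw [Real.sin_two_mul]; ring
      rw [h2, abs_div, abs_two]
      gcongr
      exact Real.abs_sin_le_one _
    have hJlb : T/4 ≤ ∫ t in (0:ℝ)..T, sin (2*π*t*r)^2 := by
      rw [hJ]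
      have h1 : sin (2*π*r*T) * cos (2*π*r*T) ≤ 1/2 := (abs_le.mp habs).2
      have hrT : 1 ≤ 4*T*r := by
        rw [div_lt_iff₀ (by positivity)] at hbig
        nlinarith
      rw [inv_mul_eq_div, le_div_iff₀ (by positivity)]
      nlinarith [mul_le_mul_of_nonneg_left hrT hπ.le, Real.pi_gt_three]
    have hpull : (∫ t in (0:ℝ)..T, sin (2*π*t*r)^2 / (4*π^2*r^2))
        = (∫ t in (0:ℝ)..T, sin (2*π*t*r)^2) / (4*π^2*r^2) :=
      intervalIntegral.integral_div _ _
    calc min (4*T^3/(3*π^2)) (T/(16*π^2)) / (1+r^2)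
        ≤ (T/(16*π^2)) / (1+r^2) := by
          apply div_le_div_of_nonneg_right (min_le_right _ _) (by positivity)
      _ ≤ (T/4) / (4*π^2*r^2) := by
          rw [div_le_div_iff₀ (by positivity) (by positivity),
            (by field_simp; ring : T/(16*π^2) * (4*π^2*r^2) = T*r^2/4)]
          nlinarith [hT]
      _ ≤ _ := by
          rw [hpull]
          exact div_le_div_of_nonneg_right hJlb (by positivity)

lemma sigma_of_temp (d m : ℕ)
    (μ : Measure (EuclideanSpace ℝ (Fin d)))
    (htemp : (∫⁻ ξ, ENNReal.ofReal ((1 + ‖ξ‖ ^ 2) ^ (-(m : ℝ))) ∂μ) < ⊤) :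
    SigmaFinite μ := by
  constructor
  refine ⟨⟨fun n => Metric.closedBall 0 n, fun _ => trivial, fun n => ?_,
    Metric.iUnion_closedBall_nat 0⟩⟩
  set c : ℝ≥0∞ := ENNReal.ofReal ((1+(n:ℝ)^2)^(-(m:ℝ))) with hc
  have hcpos : 0 < c := ENNReal.ofReal_pos.mpr (rpow_pos_of_pos (by positivity) _)
  have hmono : c * μ (Metric.closedBall 0 n) ≤ ∫⁻ ξ, ENNReal.ofReal ((1 + ‖ξ‖ ^ 2) ^ (-(m : ℝ))) ∂μ := by
    calc c * μ (Metric.closedBall 0 n) = ∫⁻ _ in Metric.closedBall (0 : EuclideanSpace ℝ (Fin d)) n, c ∂μ :=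
          (setLIntegral_const _ c).symm
      _ ≤ ∫⁻ ξ in Metric.closedBall (0 : EuclideanSpace ℝ (Fin d)) n,
            ENNReal.ofReal ((1 + ‖ξ‖ ^ 2) ^ (-(m : ℝ))) ∂μ := by
          apply setLIntegral_mono
          · exact (((continuous_const.add ((continuous_norm).pow 2) : Continuous fun ξ : EuclideanSpace ℝ (Fin d) => 1 + ‖ξ‖ ^ 2).rpow_const
              (fun x => Or.inl (add_pos_of_pos_of_nonneg one_pos (sq_nonneg _)).ne')).measurable).ennreal_ofReal
          · intro ξ hξ
            rw [Metric.mem_closedBall, dist_zero_right] at hξ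
            apply ENNReal.ofReal_le_ofReal
            apply Real.rpow_le_rpow_of_nonpos (by positivity) (by nlinarith [norm_nonneg ξ])
            simp
      _ ≤ _ := setLIntegral_le_lintegral _ _
  have hlt := hmono.trans_lt htemp
  rw [lt_top_iff_ne_top]
  intro h
  rw [h, ENNReal.mul_top hcpos.ne'] at hlt
  exact (lt_irrefl _ hlt).elim


/-- For the wave kernel on `ℝ^d`, whose spatial Fourier transform is
`F Γ(t)(ξ) = sin(2πt|ξ|)/(2π|ξ|)`: for every `T > 0` there are constants
`c₁, c₂ > 0` with `c₁/(1+|ξ|²) ≤ ∫₀^T sin²(2πt|ξ|)/(4π²|ξ|²) dt ≤ c₂/(1+|ξ|²)` for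
all `ξ ≠ 0`, and consequently, for a non-negative tempered measure `μ`,
`∫₀^T ∫ |sin(2πt|ξ|)/(2π|ξ|)|² μ(dξ) dt < ∞  ↔  ∫ μ(dξ)/(1+|ξ|²) < ∞`. -/
theorem wave_kernel_fourier_integrability
    (d : ℕ) (T : ℝ) (hT : 0 < T)
    (μ : Measure (EuclideanSpace ℝ (Fin d)))
    (m : ℕ) (hm : 1 ≤ m)
    (htemp : (∫⁻ ξ, ENNReal.ofReal ((1 + ‖ξ‖ ^ 2) ^ (-(m : ℝ))) ∂μ) < ⊤) :
    (∃ c₁ c₂ : ℝ, 0 < c₁ ∧ 0 < c₂ ∧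
      ∀ ξ : EuclideanSpace ℝ (Fin d), ξ ≠ 0 →
        c₁ / (1 + ‖ξ‖ ^ 2)
            ≤ (∫ t in (0 : ℝ)..T, (Real.sin (2 * π * t * ‖ξ‖)) ^ 2 / (4 * π ^ 2 * ‖ξ‖ ^ 2)) ∧
          (∫ t in (0 : ℝ)..T, (Real.sin (2 * π * t * ‖ξ‖)) ^ 2 / (4 * π ^ 2 * ‖ξ‖ ^ 2))
            ≤ c₂ / (1 + ‖ξ‖ ^ 2)) ∧
    ((∫⁻ t in Set.Ioc (0 : ℝ) T,
        ∫⁻ ξ, ENNReal.ofReal ((Real.sin (2 * π * t * ‖ξ‖) / (2 * π * ‖ξ‖)) ^ 2) ∂μ) < ⊤ ↔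
      (∫⁻ ξ, ENNReal.ofReal (1 / (1 + ‖ξ‖ ^ 2)) ∂μ) < ⊤) := by
  have hπ := pi_pos
  set c₁ : ℝ := min (4*T^3/(3*π^2)) (T/(16*π^2)) with hc₁
  set c₂ : ℝ := T^3/3 + T/(4*π^2) with hc₂
  have hc₁pos : 0 < c₁ := lt_min (by positivity) (by positivity)
  have hc₂pos : 0 < c₂ := by positivity
  haveI hsig : SigmaFinite μ := sigma_of_temp d m μ htemp
  -- Step 1: rewrite the double lintegral
  have key1 : (∫⁻ t in Set.Ioc (0 : ℝ) T,
        ∫⁻ ξ, ENNReal.ofReal ((Real.sin (2 * π * t * ‖ξ‖) / (2 * π * ‖ξ‖)) ^ 2) ∂μ)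
      = ∫⁻ ξ, ENNReal.ofReal (∫ t in (0:ℝ)..T,
          Real.sin (2*π*t*‖ξ‖)^2 / (4*π^2*‖ξ‖^2)) ∂μ := by
    have hmeas : Measurable (Function.uncurry fun (t : ℝ) (ξ : EuclideanSpace ℝ (Fin d)) =>
        ENNReal.ofReal ((Real.sin (2 * π * t * ‖ξ‖) / (2 * π * ‖ξ‖)) ^ 2)) := by
      apply ENNReal.measurable_ofReal.comp
      apply Measurable.pow_const
      exact ((Real.continuous_sin.comp (by continuity :
          Continuous fun p : ℝ × EuclideanSpace ℝ (Fin d) => 2*π*p.1*‖p.2‖)).measurable).div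
        ((by continuity : Continuous fun p : ℝ × EuclideanSpace ℝ (Fin d) => 2*π*‖p.2‖).measurable)
    rw [lintegral_lintegral_swap (μ := volume.restrict (Set.Ioc (0:ℝ) T)) (ν := μ)
      hmeas.aemeasurable]
    refine lintegral_congr fun ξ => ?_
    have heq : ∀ t : ℝ, (Real.sin (2*π*t*‖ξ‖)/(2*π*‖ξ‖))^2
        = Real.sin (2*π*t*‖ξ‖)^2 / (4*π^2*‖ξ‖^2) := by
      intro t; rw [div_pow]; congr 1; ring
    simp_rw [heq]
    rw [intervalIntegral.integral_of_le hT.le,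
      MeasureTheory.ofReal_integral_eq_lintegral_ofReal
        ((cont_integrand ‖ξ‖).integrableOn_Ioc)
        (Filter.Eventually.of_forall fun t => by positivity)]
  refine ⟨⟨c₁, c₂, hc₁pos, hc₂pos, fun ξ hξ => ?_⟩, ?_⟩
  · have hr : 0 < ‖ξ‖ := norm_pos_iff.mpr hξ
    exact ⟨kernel_lower T ‖ξ‖ hT hr, kernel_upper T ‖ξ‖ hT hr.le⟩
  rw [key1]
  constructor
  · -- forward
    intro hA
    have pt : ∀ ξ : EuclideanSpace ℝ (Fin d),
        ENNReal.ofReal (1 / (1 + ‖ξ‖ ^ 2))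
          ≤ ENNReal.ofReal ((1 + ‖ξ‖ ^ 2) ^ (-(m : ℝ)))
            + (ENNReal.ofReal c₁)⁻¹ * ENNReal.ofReal (∫ t in (0:ℝ)..T,
                Real.sin (2*π*t*‖ξ‖)^2 / (4*π^2*‖ξ‖^2)) := by
      intro ξ
      by_cases hξ : ξ = 0
      · subst hξ
        simp only [norm_zero, ne_eq]
        rw [show ((0:ℝ)^2 : ℝ) = 0 by ring]
        norm_num
      · have hr : 0 < ‖ξ‖ := norm_pos_iff.mpr hξ
        have hlow := kernel_lower T ‖ξ‖ hT hr
        calc ENNReal.ofReal (1 / (1 + ‖ξ‖ ^ 2))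
            = (ENNReal.ofReal c₁)⁻¹ * ENNReal.ofReal (c₁ * (1 / (1 + ‖ξ‖ ^ 2))) := by
              rw [ENNReal.ofReal_mul hc₁pos.le, ← mul_assoc,
                ENNReal.inv_mul_cancel (by simpa using hc₁pos) ENNReal.ofReal_ne_top, one_mul]
          _ ≤ (ENNReal.ofReal c₁)⁻¹ * ENNReal.ofReal (∫ t in (0:ℝ)..T,
                Real.sin (2*π*t*‖ξ‖)^2 / (4*π^2*‖ξ‖^2)) := by
              gcongr
              rw [mul_one_div]
              exact hlow
          _ ≤ _ := le_add_self
    have hmon := lintegral_mono pt (μ := μ)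
    have hmeas1 : Measurable fun ξ : EuclideanSpace ℝ (Fin d) =>
        ENNReal.ofReal ((1 + ‖ξ‖ ^ 2) ^ (-(m : ℝ))) :=
      (((continuous_const.add ((continuous_norm).pow 2) : Continuous fun ξ : EuclideanSpace ℝ (Fin d) => 1 + ‖ξ‖ ^ 2).rpow_const
        (fun x => Or.inl (add_pos_of_pos_of_nonneg one_pos (sq_nonneg _)).ne')).measurable).ennreal_ofReal
    rw [lintegral_add_left hmeas1, lintegral_const_mul' _ _
      (ENNReal.inv_ne_top.mpr (by simpa using hc₁pos))] at hmon
    refine hmon.trans_lt (ENNReal.add_lt_top.mpr ⟨htemp, ?_⟩)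
    exact ENNReal.mul_lt_top (ENNReal.inv_lt_top.mpr (by simpa using hc₁pos)) hA
  · -- backward
    intro hB
    have pt : ∀ ξ : EuclideanSpace ℝ (Fin d),
        ENNReal.ofReal (∫ t in (0:ℝ)..T, Real.sin (2*π*t*‖ξ‖)^2 / (4*π^2*‖ξ‖^2))
          ≤ ENNReal.ofReal c₂ * ENNReal.ofReal (1 / (1 + ‖ξ‖ ^ 2)) := by
      intro ξ
      rw [← ENNReal.ofReal_mul hc₂pos.le, mul_one_div]
      exact ENNReal.ofReal_le_ofReal (kernel_upper T ‖ξ‖ hT (norm_nonneg ξ))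
    refine (lintegral_mono pt (μ := μ)).trans_lt ?_
    rw [lintegral_const_mul' _ _ ENNReal.ofReal_ne_top]
    exact ENNReal.mul_lt_top ENNReal.ofReal_lt_top hB
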